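/- Suppose P = (γ,θ,ν) ∈ 𝒬 with ν = 1/2 - θ (i.e., θ+ν = 1/2) and condition (A1) holds. Let M = ⌊1/(1-γ)⌋. Then ν ≥ 1/(2M+2) if M is even, and ν ≥ 1/(2M+4) if M is odd. -/

import Mathlib

/-- Suppose `P = (γ,θ,ν) ∈ 𝒬` with `ν = 1/2 - θ` (i.e. `θ+ν = 1/2`)
and condition (A1) holds, and let `M = ⌊1/(1-γ)⌋`.  Then `ν ≥ 1/(2M+2)` if `M` is even,
and `ν ≥ 1/(2M+4)` if `M` is odd. -/
theorem nu_lower_bound_half (γ θ ν : ℝ) (M : ℕ) (hM : M = ⌊1 / (1 - γ)⌋₊)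
    (hQ1 : (1 / 2 ≤ γ ∧ γ ≤ 1 - θ - ν) ∨ (1 - θ ≤ γ ∧ γ < 1))
    (hQ2 : (0 ≤ θ ∧ θ < θ + ν ∧ θ + ν ≤ 1 / 2) ∨ (0 ≤ θ ∧ θ < 1 / 2 ∧ θ + ν = 1 - θ))
    (hν : ν = 1 / 2 - θ)
    (hA1 : ∀ n : ℕ, M + 1 ≤ n →
        ∃ a : ℕ, 0 < a ∧ θ ≤ (a : ℝ) / n ∧ (a : ℝ) / n ≤ θ + ν) :
    (Even M → 1 / (2 * (M : ℝ) + 2) ≤ ν) ∧ (Odd M → 1 / (2 * (M : ℝ) + 4) ≤ ν) := by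
  have key : ∀ n : ℕ, Odd n → M + 1 ≤ n → 1 / (2 * (n : ℝ)) ≤ ν := by
    intro n hodd hn
    obtain ⟨a, hapos, h1, h2⟩ := hA1 n hn
    have hn0 : (0 : ℝ) < n := by
      have : 0 < n := by omega
      exact_mod_cast this
    have h2' : (a : ℝ) / n ≤ 1 / 2 := by rw [hν] at h2; linarith
    have h2a : 2 * a + 1 ≤ n := by
      have hr : (2 * a : ℝ) ≤ n := by
        rw [div_le_div_iff₀ hn0 (by norm_num)] at h2'
        push_cast
        linarith
      have h2an : 2 * a ≤ n := by exact_mod_cast hr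
      rcases hodd with ⟨k, hk⟩
      omega
    have hcast : (2 * (a : ℝ) + 1) ≤ n := by exact_mod_cast h2a
    have hθ : θ ≤ ((n : ℝ) - 1) / (2 * n) := by
      calc θ ≤ (a : ℝ) / n := h1
        _ ≤ ((n : ℝ) - 1) / (2 * n) := by
            rw [div_le_div_iff₀ hn0 (by positivity)]
            nlinarith
    have heq : 1 / (2 * (n : ℝ)) = 1 / 2 - ((n : ℝ) - 1) / (2 * n) := by
      field_simp
      ring
    rw [hν]
    linarith
  constructor
  · intro hM_even
    have hodd : Odd (M + 1) := Even.add_one hM_even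
    have := key (M + 1) hodd (le_refl _)
    push_cast at this
    rw [show 2 * ((M : ℝ) + 1) = 2 * (M : ℝ) + 2 from by ring] at this
    exact this
  · intro hM_odd
    have hodd : Odd (M + 2) := by
      rcases hM_odd with ⟨k, hk⟩
      exact ⟨k + 1, by omega⟩
    have := key (M + 2) hodd (by omega)
    push_cast at this
    rw [show 2 * ((M : ℝ) + 2) = 2 * (M : ℝ) + 4 from by ring] at this
    exact this
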